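/- Let n be a natural number and let f₁, …, f_n : ℝ → ℂ be continuous on [0,2]. Then ∫_{0 ≤ t₁ ≤ ⋯ ≤ t_n ≤ 2} f₁(t₁)⋯f_n(t_n) dt₁⋯dt_n = Σ_{i=0}^{n} (∫_{0 ≤ t₁ ≤ ⋯ ≤ t_i ≤ 1} f₁(t₁)⋯f_i(t_i) dt₁⋯dt_i) · (∫_{1 ≤ t_{i+1} ≤ ⋯ ≤ t_n ≤ 2} f_{i+1}(t_{i+1})⋯f_n(t_n) dt_{i+1}⋯dt_n), where an empty integral (i = 0 or i = n) is interpreted as 1. -/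

import Mathlib

open MeasureTheory

/-- Chen's iterated integral of the functions `f 0, …, f (n-1)` (pullbacks of
1-forms along a path) over the simplex `x ≤ t 0 ≤ t 1 ≤ ⋯ ≤ t (n-1) ≤ y`. -/
noncomputable def chenIterated (n : ℕ) (x y : ℝ) (f : Fin n → ℝ → ℂ) : ℂ :=
  ∫ t in {t : Fin n → ℝ | (∀ i, x ≤ t i ∧ t i ≤ y) ∧ ∀ i j : Fin n, i ≤ j → t i ≤ t j},
    ∏ i, f i (t i)

namespace ChenAux

/-- The simplex over which the Chen iterated integral is taken. -/
def simplexSet (n : ℕ) (x y : ℝ) : Set (Fin n → ℝ) :=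
  {t : Fin n → ℝ | (∀ i, x ≤ t i ∧ t i ≤ y) ∧ ∀ i j : Fin n, i ≤ j → t i ≤ t j}

lemma chenIterated_eq (n : ℕ) (x y : ℝ) (f : Fin n → ℝ → ℂ) :
    chenIterated n x y f = ∫ t in simplexSet n x y, ∏ i, f i (t i) := rfl

lemma isClosed_setOf_imp {α : Type*} [TopologicalSpace α] {p : Prop} {s : Set α}
    (hs : IsClosed s) : IsClosed {x | p → x ∈ s} := by
  by_cases h : p
  · simpa [h] using hs
  · simp [h]

lemma isClosed_mono (n : ℕ) :
    IsClosed {t : Fin n → ℝ | ∀ i j : Fin n, i ≤ j → t i ≤ t j} := by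
  have : {t : Fin n → ℝ | ∀ i j : Fin n, i ≤ j → t i ≤ t j} =
      ⋂ i, ⋂ j, {t : Fin n → ℝ | i ≤ j → t ∈ {t : Fin n → ℝ | t i ≤ t j}} := by
    ext t; simp [Set.mem_iInter]
  rw [this]
  exact isClosed_iInter fun i => isClosed_iInter fun j =>
    isClosed_setOf_imp (isClosed_le (continuous_apply i) (continuous_apply j))

lemma isClosed_simplexSet (n : ℕ) (x y : ℝ) : IsClosed (simplexSet n x y) := by
  have : simplexSet n x y =
      (⋂ i, ({t : Fin n → ℝ | x ≤ t i} ∩ {t : Fin n → ℝ | t i ≤ y})) ∩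
        {t : Fin n → ℝ | ∀ i j : Fin n, i ≤ j → t i ≤ t j} := by
    ext t
    simp only [simplexSet, Set.mem_setOf_eq, Set.mem_inter_iff, Set.mem_iInter]
  rw [this]
  exact IsClosed.inter
    (isClosed_iInter fun i => (isClosed_le continuous_const (continuous_apply i)).inter
      (isClosed_le (continuous_apply i) continuous_const))
    (isClosed_mono n)

lemma simplexSet_subset (n : ℕ) (x y : ℝ) :
    simplexSet n x y ⊆ Set.pi Set.univ fun _ => Set.Icc x y := by
  intro t ht i _
  exact ⟨(ht.1 i).1, (ht.1 i).2⟩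

lemma isCompact_simplexSet (n : ℕ) (x y : ℝ) : IsCompact (simplexSet n x y) :=
  IsCompact.of_isClosed_subset (isCompact_univ_pi fun _ => isCompact_Icc)
    (isClosed_simplexSet n x y) (simplexSet_subset n x y)

lemma continuousOn_prodfun {n : ℕ} {x y : ℝ} {f : Fin n → ℝ → ℂ}
    (hf : ∀ i, ContinuousOn (f i) (Set.Icc x y)) :
    ContinuousOn (fun t : Fin n → ℝ => ∏ i, f i (t i))
      (Set.pi Set.univ fun _ => Set.Icc x y) := by
  apply continuousOn_finset_prod
  intro i _
  exact (hf i).comp (continuous_apply i).continuousOn (fun t ht => ht i (Set.mem_univ i))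

lemma integrableOn_prodfun {n : ℕ} {x y : ℝ} {f : Fin n → ℝ → ℂ}
    (hf : ∀ i, ContinuousOn (f i) (Set.Icc x y)) {s : Set (Fin n → ℝ)}
    (hs : IsCompact s) (hsub : s ⊆ Set.pi Set.univ fun _ => Set.Icc x y) :
    IntegrableOn (fun t => ∏ i, f i (t i)) s :=
  ((continuousOn_prodfun hf).mono hsub).integrableOn_compact hs

/-- The piece of the `[0,2]`-simplex where the first `k` coordinates lie in `[0,1]`
and the remaining ones in `[1,2]`. -/
def pieceSet (n k : ℕ) : Set (Fin n → ℝ) :=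
  {t : Fin n → ℝ |
    (∀ i : Fin n, ((i : ℕ) < k → 0 ≤ t i ∧ t i ≤ 1) ∧ (k ≤ (i : ℕ) → 1 ≤ t i ∧ t i ≤ 2)) ∧
      ∀ i j : Fin n, i ≤ j → t i ≤ t j}

lemma isClosed_pieceSet (n k : ℕ) : IsClosed (pieceSet n k) := by
  have : pieceSet n k =
      (⋂ i : Fin n,
          ({t : Fin n → ℝ | (i : ℕ) < k → t ∈ {t : Fin n → ℝ | 0 ≤ t i} ∩ {t | t i ≤ 1}} ∩
           {t : Fin n → ℝ | k ≤ (i : ℕ) → t ∈ {t : Fin n → ℝ | 1 ≤ t i} ∩ {t | t i ≤ 2}})) ∩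
        {t : Fin n → ℝ | ∀ i j : Fin n, i ≤ j → t i ≤ t j} := by
    ext t
    simp only [pieceSet, Set.mem_setOf_eq, Set.mem_inter_iff, Set.mem_iInter]
  rw [this]
  refine IsClosed.inter (isClosed_iInter fun i => IsClosed.inter ?_ ?_) (isClosed_mono n)
  · exact isClosed_setOf_imp ((isClosed_le continuous_const (continuous_apply i)).inter
      (isClosed_le (continuous_apply i) continuous_const))
  · exact isClosed_setOf_imp ((isClosed_le continuous_const (continuous_apply i)).inter
      (isClosed_le (continuous_apply i) continuous_const))

lemma pieceSet_subset (n k : ℕ) :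
    pieceSet n k ⊆ Set.pi Set.univ fun _ => Set.Icc (0:ℝ) 2 := by
  intro t ht i _
  rcases lt_or_ge (i : ℕ) k with h | h
  · have := (ht.1 i).1 h
    constructor <;> linarith [this.1, this.2]
  · have := (ht.1 i).2 h
    constructor <;> linarith [this.1, this.2]

lemma isCompact_pieceSet (n k : ℕ) : IsCompact (pieceSet n k) :=
  IsCompact.of_isClosed_subset (isCompact_univ_pi fun _ => isCompact_Icc)
    (isClosed_pieceSet n k) (pieceSet_subset n k)

/-- The Fubini step: the integral over a piece factors as the product of two
Chen iterated integrals. -/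
lemma integral_pieceSet (n k m : ℕ) (h : k + m = n) (f : Fin n → ℝ → ℂ)
    (hf : ∀ i, ContinuousOn (f i) (Set.Icc 0 2)) :
    ∫ t in pieceSet n k, ∏ i, f i (t i) =
      chenIterated k 0 1 (fun a => f (Fin.cast h (Fin.castAdd m a))) *
        chenIterated m 1 2 (fun b => f (Fin.cast h (Fin.natAdd k b))) := by
  classical
  set e : Fin k ⊕ Fin m ≃ Fin n := finSumFinEquiv.trans (finCongr h) with he
  have hval1 : ∀ a : Fin k, ((e (Sum.inl a) : Fin n) : ℕ) = (a : ℕ) := by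
    intro a; simp [he]
  have hval2 : ∀ b : Fin m, ((e (Sum.inr b) : Fin n) : ℕ) = k + (b : ℕ) := by
    intro b; simp [he]
  set Φ : ((Fin k → ℝ) × (Fin m → ℝ)) ≃ᵐ (Fin n → ℝ) :=
    ((MeasurableEquiv.sumPiEquivProdPi (fun _ : Fin k ⊕ Fin m => ℝ)).symm).trans
      (MeasurableEquiv.piCongrLeft (fun _ : Fin n => ℝ) e) with hΦdef
  have hΦ : MeasurePreserving Φ volume volume :=
    (volume_measurePreserving_piCongrLeft (fun _ : Fin n => ℝ) e).comp
      (volume_measurePreserving_sumPiEquivProdPi_symm (fun _ : Fin k ⊕ Fin m => ℝ))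
  have happl : ∀ (u : Fin k → ℝ) (v : Fin m → ℝ) (a : Fin k),
      Φ (u, v) (e (Sum.inl a)) = u a := fun u v a =>
    Equiv.piCongrLeft_sumInl (fun _ : Fin n => ℝ) e u v a
  have happr : ∀ (u : Fin k → ℝ) (v : Fin m → ℝ) (b : Fin m),
      Φ (u, v) (e (Sum.inr b)) = v b := fun u v b =>
    Equiv.piCongrLeft_sumInr (fun _ : Fin n => ℝ) e u v b
  have hmemA : ∀ (u : Fin k → ℝ) (v : Fin m → ℝ),
      Φ (u, v) ∈ pieceSet n k ↔ u ∈ simplexSet k 0 1 ∧ v ∈ simplexSet m 1 2 := by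
    intro u v
    constructor
    · rintro ⟨hb, hm⟩
      refine ⟨⟨fun a => ?_, fun a b hab => ?_⟩, fun b => ?_, fun a b hab => ?_⟩
      · have := (hb (e (Sum.inl a))).1 (by rw [hval1]; exact a.isLt)
        rwa [happl] at this
      · have := hm (e (Sum.inl a)) (e (Sum.inl b))
          (by rw [Fin.le_def, hval1, hval1]; exact hab)
        rwa [happl, happl] at this
      · have := (hb (e (Sum.inr b))).2 (by rw [hval2]; omega)
        rwa [happr] at this
      · have := hm (e (Sum.inr a)) (e (Sum.inr b))
          (by rw [Fin.le_def, hval2, hval2]; omega)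
        rwa [happr, happr] at this
    · rintro ⟨⟨hu1, hu2⟩, hv1, hv2⟩
      constructor
      · intro i
        constructor
        · intro hik
          have hi : i = e (Sum.inl ⟨(i : ℕ), hik⟩) := Fin.ext (by rw [hval1])
          rw [hi, happl]
          exact hu1 _
        · intro hki
          have hik : (i : ℕ) - k < m := by omega
          have hi : i = e (Sum.inr ⟨(i : ℕ) - k, hik⟩) := Fin.ext (by rw [hval2]; simp only [Fin.val_mk]; omega)
          rw [hi, happr]
          exact hv1 _
      · intro i j hij
        rw [Fin.le_def] at hij
        rcases lt_or_ge (i : ℕ) k with hi | hi <;> rcases lt_or_ge (j : ℕ) k with hj | hj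
        · have h1 : i = e (Sum.inl ⟨(i : ℕ), hi⟩) := Fin.ext (by rw [hval1])
          have h2 : j = e (Sum.inl ⟨(j : ℕ), hj⟩) := Fin.ext (by rw [hval1])
          rw [h1, h2, happl, happl]
          exact hu2 _ _ (by rw [Fin.mk_le_mk]; exact hij)
        · have h1 : i = e (Sum.inl ⟨(i : ℕ), hi⟩) := Fin.ext (by rw [hval1])
          have hjk : (j : ℕ) - k < m := by omega
          have h2 : j = e (Sum.inr ⟨(j : ℕ) - k, hjk⟩) := Fin.ext (by rw [hval2]; simp only [Fin.val_mk]; omega)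
          rw [h1, h2, happl, happr]
          calc u _ ≤ 1 := (hu1 _).2
            _ ≤ v _ := (hv1 _).1
        · omega
        · have hik : (i : ℕ) - k < m := by omega
          have hjk : (j : ℕ) - k < m := by omega
          have h1 : i = e (Sum.inr ⟨(i : ℕ) - k, hik⟩) := Fin.ext (by rw [hval2]; simp only [Fin.val_mk]; omega)
          have h2 : j = e (Sum.inr ⟨(j : ℕ) - k, hjk⟩) := Fin.ext (by rw [hval2]; simp only [Fin.val_mk]; omega)
          rw [h1, h2, happr, happr]
          exact hv2 _ _ (by rw [Fin.mk_le_mk]; omega)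
  have hprodf : ∀ (u : Fin k → ℝ) (v : Fin m → ℝ),
      (∏ i, f i (Φ (u, v) i)) =
        (∏ a, f (e (Sum.inl a)) (u a)) * (∏ b, f (e (Sum.inr b)) (v b)) := by
    intro u v
    rw [← Equiv.prod_comp e (fun i => f i (Φ (u, v) i)), Fintype.prod_sum_type]
    congr 1
    · exact Finset.prod_congr rfl fun a _ => by rw [happl]
    · exact Finset.prod_congr rfl fun b _ => by rw [happr]
  have hfun1 : (fun a : Fin k => f (Fin.cast h (Fin.castAdd m a))) =
      fun a => f (e (Sum.inl a)) := by
    funext a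
    exact congrArg f (Fin.ext (by simp [hval1]))
  have hfun2 : (fun b : Fin m => f (Fin.cast h (Fin.natAdd k b))) =
      fun b => f (e (Sum.inr b)) := by
    funext b
    exact congrArg f (Fin.ext (by simp [hval2]))
  rw [hfun1, hfun2, chenIterated_eq, chenIterated_eq]
  have hS1 : MeasurableSet (simplexSet k 0 1) := (isClosed_simplexSet k 0 1).measurableSet
  have hS2 : MeasurableSet (simplexSet m 1 2) := (isClosed_simplexSet m 1 2).measurableSet
  calc ∫ t in pieceSet n k, ∏ i, f i (t i)
      = ∫ t, (pieceSet n k).indicator (fun t => ∏ i, f i (t i)) t :=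
        (integral_indicator (isClosed_pieceSet n k).measurableSet).symm
    _ = ∫ p : (Fin k → ℝ) × (Fin m → ℝ),
          (pieceSet n k).indicator (fun t => ∏ i, f i (t i)) (Φ p) :=
        (hΦ.integral_comp' _).symm
    _ = ∫ p : (Fin k → ℝ) × (Fin m → ℝ),
          ((simplexSet k 0 1).indicator (fun u => ∏ a, f (e (Sum.inl a)) (u a)) p.1) *
            ((simplexSet m 1 2).indicator (fun v => ∏ b, f (e (Sum.inr b)) (v b)) p.2) := by
        refine integral_congr_ae (Filter.Eventually.of_forall ?_)
        rintro ⟨u, v⟩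
        by_cases h1 : u ∈ simplexSet k 0 1 <;> by_cases h2 : v ∈ simplexSet m 1 2 <;>
          simp [Set.indicator_apply, hmemA u v, h1, h2, hprodf u v]
    _ = (∫ u, (simplexSet k 0 1).indicator (fun u => ∏ a, f (e (Sum.inl a)) (u a)) u) *
          ∫ v, (simplexSet m 1 2).indicator (fun v => ∏ b, f (e (Sum.inr b)) (v b)) v := by
        rw [MeasureTheory.Measure.volume_eq_prod, integral_prod_mul]
    _ = (∫ u in simplexSet k 0 1, ∏ a, f (e (Sum.inl a)) (u a)) *
          ∫ v in simplexSet m 1 2, ∏ b, f (e (Sum.inr b)) (v b) := by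
        rw [integral_indicator hS1, integral_indicator hS2]

end ChenAux

open ChenAux in
/-- Corollary 1.3 (composition of paths): the iterated integral over the
concatenation of a path parametrized on `[0,1]` with one parametrized on `[1,2]`
decomposes as the sum of products of iterated integrals over the two pieces
(an empty iterated integral being `1`). -/
theorem chenIterated_comp (n : ℕ) (f : Fin n → ℝ → ℂ)
    (hf : ∀ i, ContinuousOn (f i) (Set.Icc 0 2)) :
    chenIterated n 0 2 f =
      ∑ i : Fin (n + 1),
        chenIterated i.val 0 1
            (fun k => f ⟨k.val, lt_of_lt_of_le k.isLt (Nat.lt_succ_iff.mp i.isLt)⟩)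
          * chenIterated (n - i.val) 1 2
            (fun k => f ⟨i.val + k.val, by have hk := k.isLt; omega⟩) := by
  classical
  set g : (Fin n → ℝ) → ℂ := fun t => ∏ i, f i (t i) with hg
  set B : Fin (n + 1) → Set (Fin n → ℝ) := fun p =>
    simplexSet n 0 2 ∩
      ⋂ i : Fin n, ({t : Fin n → ℝ | (i : ℕ) < (p : ℕ) → t i ≤ 1} ∩
        {t : Fin n → ℝ | (p : ℕ) ≤ (i : ℕ) → 1 < t i}) with hB
  have hmemB : ∀ (p : Fin (n + 1)) (t : Fin n → ℝ),
      t ∈ B p ↔ t ∈ simplexSet n 0 2 ∧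
        ∀ i : Fin n, ((i : ℕ) < (p : ℕ) → t i ≤ 1) ∧ ((p : ℕ) ≤ (i : ℕ) → 1 < t i) := by
    intro p t
    simp only [hB, Set.mem_inter_iff, Set.mem_iInter, Set.mem_setOf_eq]
  have hBmeas : ∀ p, MeasurableSet (B p) := by
    intro p
    refine ((isClosed_simplexSet n 0 2).measurableSet).inter
      (MeasurableSet.iInter fun i => MeasurableSet.inter ?_ ?_)
    · by_cases hc : (i : ℕ) < (p : ℕ)
      · simp only [hc, forall_true_left]
        exact measurableSet_le (measurable_pi_apply i) measurable_const
      · simp only [hc, false_implies]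
        exact MeasurableSet.univ
    · by_cases hc : (p : ℕ) ≤ (i : ℕ)
      · simp only [hc, forall_true_left]
        exact measurableSet_lt measurable_const (measurable_pi_apply i)
      · simp only [hc, false_implies]
        exact MeasurableSet.univ
  have hBsub : ∀ p, B p ⊆ simplexSet n 0 2 := fun p => Set.inter_subset_left
  have hSunion : simplexSet n 0 2 = ⋃ p, B p := by
    ext t
    simp only [Set.mem_iUnion]
    constructor
    · intro ht
      set F := Finset.univ.filter (fun i : Fin n => t i ≤ 1) with hF
      have hcard : F.card ≤ n := le_trans (Finset.card_filter_le _ _) (by simp)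
      refine ⟨⟨F.card, by omega⟩, (hmemB _ t).mpr ⟨ht, fun i => ⟨?_, ?_⟩⟩⟩
      · intro hi
        by_contra hti
        push_neg at hti
        have hsub : F ⊆ Finset.Iio i := by
          intro j hj
          rw [hF, Finset.mem_filter] at hj
          rw [Finset.mem_Iio]
          by_contra hji
          push_neg at hji
          have := ht.2 i j hji
          linarith [hj.2]
        have := Finset.card_le_card hsub
        rw [Fin.card_Iio] at this
        simp only at hi
        omega
      · intro hi
        by_contra hti
        push_neg at hti
        have hsub : Finset.Iic i ⊆ F := by
          intro j hj
          rw [hF, Finset.mem_filter]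
          exact ⟨Finset.mem_univ _, le_trans (ht.2 j i (Finset.mem_Iic.mp hj)) hti⟩
        have := Finset.card_le_card hsub
        rw [Fin.card_Iic] at this
        simp only at hi
        omega
    · rintro ⟨p, hp⟩
      exact ((hmemB p t).mp hp).1
  have hdisj : ((Finset.univ : Finset (Fin (n + 1))) : Set (Fin (n + 1))).Pairwise (Function.onFun Disjoint B) := by
    intro p _ q _ hpq
    rw [Function.onFun, Set.disjoint_left]
    intro t htp htq
    rcases Nat.lt_or_ge (p : ℕ) (q : ℕ) with hlt | hge
    · have hpn : (p : ℕ) < n := lt_of_lt_of_le hlt (Nat.lt_succ_iff.mp q.isLt)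
      have h1 := (((hmemB p t).mp htp).2 ⟨(p : ℕ), hpn⟩).2 (le_refl _)
      have h2 := (((hmemB q t).mp htq).2 ⟨(p : ℕ), hpn⟩).1 hlt
      linarith
    · have hlt : (q : ℕ) < (p : ℕ) := by
        rcases Nat.lt_or_ge (q : ℕ) (p : ℕ) with h' | h'
        · exact h'
        · exact absurd (Fin.ext (le_antisymm h' hge)) hpq
      have hqn : (q : ℕ) < n := lt_of_lt_of_le hlt (Nat.lt_succ_iff.mp p.isLt)
      have h1 := (((hmemB q t).mp htq).2 ⟨(q : ℕ), hqn⟩).2 (le_refl _)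
      have h2 := (((hmemB p t).mp htp).2 ⟨(q : ℕ), hqn⟩).1 hlt
      linarith
  have hint : IntegrableOn g (simplexSet n 0 2) :=
    integrableOn_prodfun hf (isCompact_simplexSet n 0 2) (simplexSet_subset n 0 2)
  have hBA : ∀ p : Fin (n + 1), B p =ᵐ[volume] pieceSet n (p : ℕ) := by
    intro p
    rw [ae_eq_set]
    have hsub1 : B p ⊆ pieceSet n (p : ℕ) := by
      intro t htB
      obtain ⟨htS, hti⟩ := (hmemB p t).mp htB
      refine ⟨fun i => ⟨fun hik => ⟨(htS.1 i).1, (hti i).1 hik⟩,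
        fun hki => ⟨le_of_lt ((hti i).2 hki), (htS.1 i).2⟩⟩, htS.2⟩
    have hsub2 : pieceSet n (p : ℕ) \ B p ⊆ ⋃ i : Fin n, {t : Fin n → ℝ | t i = 1} := by
      rintro t ⟨htA, htB⟩
      have htS : t ∈ simplexSet n 0 2 := by
        refine ⟨fun i => ?_, htA.2⟩
        rcases lt_or_ge (i : ℕ) (p : ℕ) with hc | hc
        · have := (htA.1 i).1 hc
          constructor <;> linarith [this.1, this.2]
        · have := (htA.1 i).2 hc
          constructor <;> linarith [this.1, this.2]
      rw [hmemB] at htB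
      have h2 : ¬ ∀ i : Fin n, ((i : ℕ) < (p : ℕ) → t i ≤ 1) ∧ ((p : ℕ) ≤ (i : ℕ) → 1 < t i) :=
        fun hall => htB ⟨htS, hall⟩
      obtain ⟨i, hi⟩ := not_forall.mp h2
      rcases not_and_or.mp hi with hcase | hcase
      · obtain ⟨hik, hti⟩ := _root_.not_imp.mp hcase
        exact absurd ((htA.1 i).1 hik).2 hti
      · obtain ⟨hki, hti⟩ := _root_.not_imp.mp hcase
        rw [Set.mem_iUnion]
        exact ⟨i, le_antisymm (not_lt.mp hti) ((htA.1 i).2 hki).1⟩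
    constructor
    · rw [Set.diff_eq_empty.mpr hsub1]
      simp
    · refine measure_mono_null hsub2 (measure_iUnion_null fun i => ?_)
      rw [show (volume : Measure (Fin n → ℝ)) = Measure.pi fun _ => volume from rfl]
      exact Measure.pi_hyperplane _ i 1
  have hU : (⋃ p, B p) = ⋃ p ∈ (Finset.univ : Finset (Fin (n + 1))), B p := by simp
  rw [chenIterated_eq, hSunion, hU,
    integral_biUnion_finset Finset.univ (fun p _ => hBmeas p) hdisj
      (fun p _ => hint.mono_set (hBsub p))]
  refine Finset.sum_congr rfl fun p _ => ?_
  have hkm : (p : ℕ) + (n - (p : ℕ)) = n := by omega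
  rw [setIntegral_congr_set (hBA p), hg]
  rw [integral_pieceSet n (p : ℕ) (n - (p : ℕ)) hkm f hf]
  exact congrArg₂ HMul.hMul
    (congrArg (chenIterated _ 0 1) (funext fun a => congrArg f (Fin.ext (by simp))))
    (congrArg (chenIterated _ 1 2) (funext fun b => congrArg f (Fin.ext (by simp))))
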